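/- Let K be a field of characteristic p > 0, let t ∈ K ∖ K^p, and let f_1, …, f_m ∈ K{X} be differential polynomials over a Fr^n-differential field (K, ∂) with m < p^N. For any Fr^n-differential extension L of K in which t ∉ L^p, and any a ∈ L: f_1(a) = ⋯ = f_m(a) = 0 if and only if f(a) = 0, where f = f_1^{p^N} + t·f_2^{p^N} + ⋯ + t^{m−1}·f_m^{p^N}. -/

import Mathlib

open Polynomial Finset in
-- Lemma B: over a field of char p, if t has no p-th root, then 1,t,...,t^{p-1}
-- are linearly independent over the p-th powers.
lemma lemB (p : ℕ) (hp : p.Prime) {L : Type*} [Field L] [CharP L p] (t : L)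
    (ht : ¬∃ s : L, s ^ p = t) (b : ℕ → L)
    (hsum : ∑ r ∈ Finset.range p, t ^ r * b r ^ p = 0) :
    ∀ r < p, b r = 0 := by
  haveI : ExpChar L p := ExpChar.prime hp
  set F := (frobenius L p).fieldRange with hF
  have hAmem : t ^ p ∈ F := ⟨t, by simp [frobenius_def]⟩
  set A : F := ⟨t ^ p, hAmem⟩ with hA
  have hnotpow : ∀ B : F, B ^ p ≠ A := by
    rintro ⟨x, y, rfl⟩ hBA
    apply ht
    refine ⟨y, ?_⟩
    have hx : (y ^ p) ^ p = t ^ p := congrArg Subtype.val hBA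
    exact frobenius_inj L p hx
  have hirr : Irreducible (X ^ p - C A) := X_pow_sub_C_irreducible_of_prime hp hnotpow
  have hcoe : algebraMap F L A = t ^ p := rfl
  have hroot : Polynomial.aeval t (X ^ p - C A) = 0 := by
    rw [map_sub, map_pow, Polynomial.aeval_X, Polynomial.aeval_C, hcoe, sub_self]
  have hminpoly : minpoly F t = X ^ p - C A :=
    (minpoly.eq_of_irreducible_of_monic hirr hroot
      (monic_X_pow_sub_C A hp.ne_zero)).symm
  have hb : ∀ r, b r ^ p ∈ F := fun r => ⟨b r, rfl⟩
  set Q : F[X] := ∑ r ∈ Finset.range p, C (⟨b r ^ p, hb r⟩ : F) * X ^ r with hQ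
  have hQroot : Polynomial.aeval t Q = 0 := by
    rw [hQ, map_sum]
    rw [← hsum]
    refine Finset.sum_congr rfl fun r _ => ?_
    have hc : algebraMap F L (⟨b r ^ p, hb r⟩ : F) = b r ^ p := rfl
    rw [map_mul, Polynomial.aeval_C, hc, map_pow, Polynomial.aeval_X, mul_comm]
  have hQ0 : Q = 0 := by
    by_contra h
    have hdeg : Q.degree < (p : WithBot ℕ) := by
      rw [hQ]
      refine lt_of_le_of_lt (Polynomial.degree_sum_le _ _) ?_
      rw [Finset.sup_lt_iff (by exact_mod_cast WithBot.bot_lt_coe p)]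
      intro r hr
      exact lt_of_le_of_lt (Polynomial.degree_C_mul_X_pow_le r _)
        (by exact_mod_cast Finset.mem_range.mp hr)
    have := minpoly.degree_le_of_ne_zero F t h hQroot
    rw [hminpoly, Polynomial.degree_X_pow_sub_C hp.pos] at this
    exact absurd (lt_of_le_of_lt this hdeg) (lt_irrefl _)
  intro r hr
  have : Q.coeff r = ⟨b r ^ p, hb r⟩ := by
    rw [hQ, Polynomial.finset_sum_coeff]
    rw [Finset.sum_eq_single r]
    · simp
    · intro j _ hj
      simp [Polynomial.coeff_C_mul, Polynomial.coeff_X_pow, hj, Ne.symm hj]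
    · intro hrn; exact absurd (Finset.mem_range.mpr hr) hrn
  rw [hQ0] at this
  have : b r ^ p = 0 := by
    have := congrArg Subtype.val this.symm
    simpa using this
  exact pow_eq_zero_iff hp.ne_zero |>.mp this

-- regrouping a sum over range (a * b)
lemma sum_range_mul_eq {M : Type*} [AddCommMonoid M] (f : ℕ → M) (a b : ℕ) (ha : 0 < a) :
    ∑ i ∈ Finset.range (a * b), f i
      = ∑ r ∈ Finset.range a, ∑ q ∈ Finset.range b, f (r + a * q) := by
  rw [← Finset.sum_product']
  refine Finset.sum_nbij' (fun i => (i % a, i / a)) (fun x => x.1 + a * x.2) ?_ ?_ ?_ ?_ ?_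
  · intro i hi
    rw [Finset.mem_range] at hi
    refine Finset.mem_product.mpr ⟨Finset.mem_range.mpr (Nat.mod_lt _ ha), Finset.mem_range.mpr ?_⟩
    exact Nat.div_lt_of_lt_mul (by omega)
  · intro x hx
    rw [Finset.mem_product, Finset.mem_range, Finset.mem_range] at hx
    rw [Finset.mem_range]
    calc x.1 + a * x.2 < a + a * x.2 := by omega
    _ = a * (x.2 + 1) := by ring
    _ ≤ a * b := Nat.mul_le_mul_left a (by omega)
  · intro i _; simp [Nat.mod_add_div]
  · intro x hx
    rw [Finset.mem_product, Finset.mem_range, Finset.mem_range] at hx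
    ext
    · simp [Nat.add_mul_mod_self_left, Nat.mod_eq_of_lt hx.1]
    · simp [Nat.add_mul_div_left _ _ ha, Nat.div_eq_of_lt hx.1]
  · intro i _; simp [Nat.mod_add_div]

-- Key lemma: 1, t, ..., t^(p^N - 1) are independent over p^N-th powers.
lemma keyLem (p : ℕ) (hp : p.Prime) {L : Type*} [Field L] [CharP L p] (t : L)
    (ht : ¬∃ s : L, s ^ p = t) :
    ∀ N : ℕ, ∀ c : ℕ → L,
      (∑ i ∈ Finset.range (p ^ N), t ^ i * c i ^ p ^ N = 0) → ∀ i < p ^ N, c i = 0 := by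
  intro N
  induction N with
  | zero =>
    intro c hc i hi
    simp only [pow_zero] at hi
    have : i = 0 := by omega
    subst this
    simpa using hc
  | succ N ih =>
    intro c hc i hi
    haveI : ExpChar L p := ExpChar.prime hp
    have hgroup : ∑ r ∈ Finset.range p, t ^ r *
        (∑ q ∈ Finset.range (p ^ N), t ^ q * c (r + p * q) ^ p ^ N) ^ p = 0 := by
      rw [← hc, pow_succ, mul_comm (p ^ N) p, sum_range_mul_eq _ p (p ^ N) hp.pos]
      refine Finset.sum_congr rfl fun r _ => ?_
      have hfrob : (∑ q ∈ Finset.range (p ^ N), t ^ q * c (r + p * q) ^ p ^ N) ^ p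
          = ∑ q ∈ Finset.range (p ^ N), (t ^ q * c (r + p * q) ^ p ^ N) ^ p := by
        exact_mod_cast map_sum (frobenius L p) _ _
      rw [hfrob, Finset.mul_sum]
      refine Finset.sum_congr rfl fun q _ => ?_
      rw [mul_pow, ← pow_mul, ← pow_mul, pow_add, pow_mul]
      ring
    have hb := lemB p hp t ht _ hgroup
    have hr : i % p < p := Nat.mod_lt _ hp.pos
    have hq : i / p < p ^ N := Nat.div_lt_of_lt_mul (by rw [← pow_succ']; exact hi)
    have := ih (fun q => c (i % p + p * q)) (hb (i % p) hr) (i / p) hq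
    simpa [Nat.mod_add_div] using this

def IsFrDeriv {R : Type*} [CommRing R] (q : ℕ) (d : R → R) : Prop :=
  (∀ x y, d (x + y) = d x + d y) ∧ (∀ x y, d (x * y) = x ^ q * d y + y ^ q * d x)

open MvPolynomial in
theorem stmt19 (p n N : ℕ) [Fact p.Prime] (hn : 0 < n)
    {K L : Type*} [Field K] [Field L] [Algebra K L] [CharP K p] [CharP L p]
    (dK : K → K) (dL : L → L)
    (hdK : IsFrDeriv (p ^ n) dK) (hdL : IsFrDeriv (p ^ n) dL)
    (hcompat : ∀ x : K, dL (algebraMap K L x) = algebraMap K L (dK x))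
    (t : K) (htK : ¬∃ s : K, s ^ p = t)
    (htL : ¬∃ s : L, s ^ p = algebraMap K L t)
    (m : ℕ) (hm : m < p ^ N) (f : Fin m → MvPolynomial ℕ K) (a : L) :
    (∀ i, eval₂ (algebraMap K L) (fun j => dL^[j] a) (f i) = 0) ↔
      eval₂ (algebraMap K L) (fun j => dL^[j] a)
        (∑ i : Fin m, C t ^ (i : ℕ) * f i ^ p ^ N) = 0 := by
  have hp : p.Prime := Fact.out
  set v : ℕ → L := fun j => dL^[j] a with hv
  set t' : L := algebraMap K L t with ht'
  set c : Fin m → L := fun i => eval₂ (algebraMap K L) v (f i) with hcdef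
  have hev : eval₂ (algebraMap K L) v (∑ i : Fin m, C t ^ (i : ℕ) * f i ^ p ^ N)
      = ∑ i : Fin m, t' ^ (i : ℕ) * c i ^ p ^ N := by
    rw [show eval₂ (algebraMap K L) v = (eval₂Hom (algebraMap K L) v : MvPolynomial ℕ K →+* L)
      from rfl, map_sum]
    refine Finset.sum_congr rfl fun i _ => ?_
    rw [map_mul, map_pow, map_pow]
    simp [hcdef, ht']
  rw [hev]
  constructor
  · intro h
    refine Finset.sum_eq_zero fun i _ => ?_
    rw [show c i = 0 from h i, zero_pow (pow_ne_zero N hp.ne_zero), mul_zero]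
  · intro h i
    set c' : ℕ → L := fun j => if hj : j < m then c ⟨j, hj⟩ else 0 with hc'
    have hvanish : ∀ j ∈ Finset.range (p ^ N), j ∉ Finset.range m →
        t' ^ j * c' j ^ p ^ N = 0 := by
      intro j _ hj
      rw [Finset.mem_range, not_lt] at hj
      have hz : c' j = 0 := by simp [hc', Nat.not_lt.mpr hj]
      rw [hz, zero_pow (pow_ne_zero N hp.ne_zero), mul_zero]
    have hsum : ∑ j ∈ Finset.range (p ^ N), t' ^ j * c' j ^ p ^ N = 0 := by
      rw [← Finset.sum_subset (Finset.range_subset_range.mpr hm.le) hvanish, Finset.sum_range, ← h]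
      refine Finset.sum_congr rfl fun j _ => ?_
      have : c' (j : ℕ) = c j := by simp [hc', j.2]
      rw [this]
    have := keyLem p hp t' htL N c' hsum i (lt_of_lt_of_le i.2 hm.le)
    have hci : c' (i : ℕ) = c i := by simp [hc', i.2]
    rw [hci] at this
    exact this
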